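/- Let a, b, δ be real with (a,b) ≠ (0,0) and let Δ(r) = √((a²-b²)r⁴ + 2δr² - 1) be positive on an interval I with 0 ∉ I. Then for the surface X(r,θ) = (∫ᵣ₀ʳ 1/Δ(s) ds, ∫ᵣ₀ʳ as²/Δ(s) ds + r cosh θ, ∫ᵣ₀ʳ bs²/Δ(s) ds + r sinh θ), the normal vector X_r × X_θ satisfies ⟨X_r × X_θ, X_r × X_θ⟩ = (ar³cosh θ/Δ(r) + r - br³sinh θ/Δ(r))² + (r/Δ(r))² > 0; consequently the surface is timelike on its whole domain. -/

import Mathlib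

/-- Lorentzian inner product on `ℝ × ℝ × ℝ` for the metric `dx² + dy² - dt²`. -/
def Lprod (p q : ℝ × ℝ × ℝ) : ℝ := p.1 * q.1 + p.2.1 * q.2.1 - p.2.2 * q.2.2

/-- Lorentzian cross product on `ℝ × ℝ × ℝ`, satisfying `Lprod (Lcross p q) w = det(p,q,w)`
up to sign conventions; it satisfies `Lprod (Lcross p q) (Lcross p q) = -(EG - F²)`. -/
def Lcross (p q : ℝ × ℝ × ℝ) : ℝ × ℝ × ℝ :=
  (p.2.1 * q.2.2 - p.2.2 * q.2.1, p.2.2 * q.1 - p.1 * q.2.2, -(p.1 * q.2.1 - p.2.1 * q.1))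

/-- For the Type I general ZMC surface of Riemann type foliated by hyperbolas,
with `Δ(r) = √((a²-b²)r⁴ + 2δr² - 1)` positive on an interval `I` with `0 ∉ I`, the normal
vector `X_r × X_θ` satisfies
`⟨X_r × X_θ, X_r × X_θ⟩ = (ar³cosh θ/Δ(r) + r - br³sinh θ/Δ(r))² + (r/Δ(r))² > 0`;
hence the surface is timelike on its whole domain. -/
theorem stmt7 (a b δ : ℝ) (hab : (a, b) ≠ ((0 : ℝ), (0 : ℝ)))
    (I : Set ℝ) (hIo : IsOpen I) (hIc : I.OrdConnected) (h0 : (0:ℝ) ∉ I)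
    (Δ : ℝ → ℝ) (hΔ : ∀ s, Δ s = Real.sqrt ((a ^ 2 - b ^ 2) * s ^ 4 + 2 * δ * s ^ 2 - 1))
    (hpos : ∀ s ∈ I, 0 < (a ^ 2 - b ^ 2) * s ^ 4 + 2 * δ * s ^ 2 - 1)
    (r0 : ℝ) (hr0 : r0 ∈ I)
    (X : ℝ → ℝ → ℝ × ℝ × ℝ)
    (hX : ∀ r θ, X r θ = ((∫ s in r0..r, 1 / Δ s),
        (∫ s in r0..r, a * s ^ 2 / Δ s) + r * Real.cosh θ,
        (∫ s in r0..r, b * s ^ 2 / Δ s) + r * Real.sinh θ)) :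
    ∀ r ∈ I, ∀ θ : ℝ,
      let n := Lcross (deriv (fun r' => X r' θ) r) (deriv (fun θ' => X r θ') θ)
      Lprod n n =
        (a * r ^ 3 * Real.cosh θ / Δ r + r - b * r ^ 3 * Real.sinh θ / Δ r) ^ 2 +
          (r / Δ r) ^ 2 ∧
      0 < Lprod n n := by
  intro r hr θ
  have hΔcont : Continuous Δ := by
    have : Δ = fun s => Real.sqrt ((a ^ 2 - b ^ 2) * s ^ 4 + 2 * δ * s ^ 2 - 1) :=
      funext hΔ
    rw [this]
    exact Real.continuous_sqrt.comp (((continuous_const.mul (continuous_pow 4)).add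
      (continuous_const.mul (continuous_pow 2))).sub continuous_const)
  have hΔpos : ∀ s ∈ I, 0 < Δ s := fun s hs => by
    rw [hΔ s]; exact Real.sqrt_pos.mpr (hpos s hs)
  have hΔne : ∀ s ∈ I, Δ s ≠ 0 := fun s hs => (hΔpos s hs).ne'
  -- FTC lemma
  have key : ∀ g : ℝ → ℝ, Continuous g →
      HasDerivAt (fun r' => ∫ s in r0..r', g s / Δ s) (g r / Δ r) r := by
    intro g hg
    have hcontOn : ContinuousOn (fun s => g s / Δ s) I :=
      hg.continuousOn.div hΔcont.continuousOn hΔne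
    refine intervalIntegral.integral_hasDerivAt_right
      ((hcontOn.mono (hIc.uIcc_subset hr0 hr)).intervalIntegrable)
      (hcontOn.stronglyMeasurableAtFilter hIo r hr) ?_
    exact (hcontOn.continuousAt (hIo.mem_nhds hr))
  have h1 : HasDerivAt (fun r' => ∫ s in r0..r', 1 / Δ s) (1 / Δ r) r :=
    key (fun _ => 1) continuous_const
  have h2 : HasDerivAt (fun r' => ∫ s in r0..r', a * s ^ 2 / Δ s) (a * r ^ 2 / Δ r) r :=
    key (fun s => a * s ^ 2) (continuous_const.mul (continuous_pow 2))
  have h3 : HasDerivAt (fun r' => ∫ s in r0..r', b * s ^ 2 / Δ s) (b * r ^ 2 / Δ r) r :=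
    key (fun s => b * s ^ 2) (continuous_const.mul (continuous_pow 2))
  -- derivative in r
  have hXr : HasDerivAt (fun r' => X r' θ)
      (1 / Δ r, a * r ^ 2 / Δ r + Real.cosh θ, b * r ^ 2 / Δ r + Real.sinh θ) r := by
    have : (fun r' => X r' θ) = fun r' => ((∫ s in r0..r', 1 / Δ s),
        (∫ s in r0..r', a * s ^ 2 / Δ s) + r' * Real.cosh θ,
        (∫ s in r0..r', b * s ^ 2 / Δ s) + r' * Real.sinh θ) := funext fun r' => hX r' θ
    rw [this]
    have H := h1.prodMk ((h2.add ((hasDerivAt_id r).mul_const (Real.cosh θ))).prodMk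
      (h3.add ((hasDerivAt_id r).mul_const (Real.sinh θ))))
    simpa using H
  -- derivative in θ
  have hXθ : HasDerivAt (fun θ' => X r θ')
      (0, r * Real.sinh θ, r * Real.cosh θ) θ := by
    have : (fun θ' => X r θ') = fun θ' => ((∫ s in r0..r, 1 / Δ s),
        (∫ s in r0..r, a * s ^ 2 / Δ s) + r * Real.cosh θ',
        (∫ s in r0..r, b * s ^ 2 / Δ s) + r * Real.sinh θ') := funext fun θ' => hX r θ'
    rw [this]
    have H := (hasDerivAt_const θ (∫ s in r0..r, 1 / Δ s)).prodMk
      (((hasDerivAt_const θ (∫ s in r0..r, a * s ^ 2 / Δ s)).add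
          ((Real.hasDerivAt_cosh θ).const_mul r)).prodMk
        ((hasDerivAt_const θ (∫ s in r0..r, b * s ^ 2 / Δ s)).add
          ((Real.hasDerivAt_sinh θ).const_mul r)))
    simpa using H
  intro n
  have hn : n = Lcross (1 / Δ r, a * r ^ 2 / Δ r + Real.cosh θ, b * r ^ 2 / Δ r + Real.sinh θ)
      (0, r * Real.sinh θ, r * Real.cosh θ) := by
    simp only [n, hXr.deriv, hXθ.deriv]
  have hd : Δ r ≠ 0 := hΔne r hr
  have hr0' : r ≠ 0 := fun h => h0 (h ▸ hr)
  have hch : Real.cosh θ ^ 2 - Real.sinh θ ^ 2 = 1 := Real.cosh_sq_sub_sinh_sq θ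
  have heq : Lprod n n =
      (a * r ^ 3 * Real.cosh θ / Δ r + r - b * r ^ 3 * Real.sinh θ / Δ r) ^ 2 +
        (r / Δ r) ^ 2 := by
    rw [hn]
    simp only [Lcross, Lprod]
    field_simp
    linear_combination (Δ r ^ 2 * (2 * (a * r ^ 3 * Real.cosh θ - b * r ^ 3 * Real.sinh θ +
      r * Δ r) * (r * Δ r) + r ^ 2 * Δ r ^ 2 *
      (Real.cosh θ ^ 2 - Real.sinh θ ^ 2 - 1) + r ^ 2) + (r ^ 2 + r ^ 2 * Δ r ^ 2 * (Real.cosh θ ^ 2 - Real.sinh θ ^ 2)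
      - r ^ 2 * Δ r ^ 4 * (Real.cosh θ ^ 2 - Real.sinh θ ^ 2 + 1) + 2 * r ^ 4 * a * Δ r * Real.cosh θ
      - 2 * r ^ 4 * a * Δ r ^ 3 * Real.cosh θ - 2 * r ^ 4 * b * Δ r * Real.sinh θ
      + 2 * r ^ 4 * b * Δ r ^ 3 * Real.sinh θ)) * hch
  refine ⟨heq, ?_⟩
  rw [heq]
  have : 0 < (r / Δ r) ^ 2 := by positivity
  nlinarith [sq_nonneg (a * r ^ 3 * Real.cosh θ / Δ r + r - b * r ^ 3 * Real.sinh θ / Δ r)]
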